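/- The positionwise distance POS is a pseudometric on the set of m×m bistochastic matrices: for all m×m bistochastic matrices X, Y, Z it holds that POS(X,X) = 0, POS(X,Y) = POS(Y,X), and POS(X,Z) ≤ POS(X,Y) + POS(Y,Z). -/

import Mathlib

open Finset

/-- Earth mover's distance between two vectors in ℝ^m: the ℓ1-distance
between their prefix-sum vectors. -/
noncomputable def emd {m : ℕ} (x y : Fin m → ℝ) : ℝ :=
  ∑ k : Fin m, |(∑ i ∈ Finset.Iic k, x i) - (∑ i ∈ Finset.Iic k, y i)|

/-- The positionwise distance between two m×m matrices: the minimum over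
permutations σ of the sum of EMD distances between matched columns. -/
noncomputable def POS {m : ℕ} (X Y : Matrix (Fin m) (Fin m) ℝ) : ℝ :=
  Finset.univ.inf' Finset.univ_nonempty
    (fun σ : Equiv.Perm (Fin m) => ∑ j : Fin m, emd (fun i => X i j) (fun i => Y i (σ j)))

/-- A matrix is bistochastic (a frequency matrix) if its entries are
nonnegative and every row and every column sums to 1. -/
def Bistochastic {m : ℕ} (X : Matrix (Fin m) (Fin m) ℝ) : Prop :=
  (∀ i j, 0 ≤ X i j) ∧ (∀ i, ∑ j, X i j = 1) ∧ (∀ j, ∑ i, X i j = 1)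

/-- The identity frequency matrix ID_m. -/
noncomputable def IDmat (m : ℕ) : Matrix (Fin m) (Fin m) ℝ :=
  fun i j => if i = j then 1 else 0

/-- The uniformity frequency matrix UN_m. -/
noncomputable def UNmat (m : ℕ) : Matrix (Fin m) (Fin m) ℝ :=
  fun _ _ => 1 / m

/-- The antagonism frequency matrix AN_m = (ID_m + rID_m)/2: entries 1/2 at
positions (i,i) and (i, m+1-i) (1-indexed), i.e. (i,j) with i+j+1 = m in
0-indexed terms. -/
noncomputable def ANmat (m : ℕ) : Matrix (Fin m) (Fin m) ℝ :=
  fun i j => ((if i = j then 1 else 0) + (if (i : ℕ) + (j : ℕ) + 1 = m then 1 else 0)) / 2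

/-- The stratification frequency matrix ST_m: block-diagonal with two
(m/2)×(m/2) blocks of entries 2/m. -/
noncomputable def STmat (m : ℕ) : Matrix (Fin m) (Fin m) ℝ :=
  fun i j => if (((i : ℕ) < m / 2) ↔ ((j : ℕ) < m / 2)) then 2 / m else 0


lemma emd_nonneg {m : ℕ} (x y : Fin m → ℝ) : 0 ≤ emd x y :=
  Finset.sum_nonneg fun _ _ => abs_nonneg _

lemma emd_self {m : ℕ} (x : Fin m → ℝ) : emd x x = 0 := by
  simp [emd]

lemma emd_comm {m : ℕ} (x y : Fin m → ℝ) : emd x y = emd y x := by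
  unfold emd
  exact Finset.sum_congr rfl fun k _ => abs_sub_comm _ _

lemma emd_triangle {m : ℕ} (x y z : Fin m → ℝ) : emd x z ≤ emd x y + emd y z := by
  unfold emd
  rw [← Finset.sum_add_distrib]
  exact Finset.sum_le_sum fun k _ => abs_sub_le _ _ _

lemma POS_le {m : ℕ} (X Y : Matrix (Fin m) (Fin m) ℝ) (σ : Equiv.Perm (Fin m)) :
    POS X Y ≤ ∑ j : Fin m, emd (fun i => X i j) (fun i => Y i (σ j)) :=
  Finset.inf'_le _ (Finset.mem_univ σ)

lemma POS_nonneg {m : ℕ} (X Y : Matrix (Fin m) (Fin m) ℝ) : 0 ≤ POS X Y :=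
  Finset.le_inf' _ _ fun σ _ => Finset.sum_nonneg fun _ _ => emd_nonneg _ _

theorem pos_pseudometric {m : ℕ} (X Y Z : Matrix (Fin m) (Fin m) ℝ)
    (hX : Bistochastic X) (hY : Bistochastic Y) (hZ : Bistochastic Z) :
    POS X X = 0 ∧ POS X Y = POS Y X ∧ POS X Z ≤ POS X Y + POS Y Z := by
  refine ⟨?_, ?_, ?_⟩
  · refine le_antisymm ?_ (POS_nonneg X X)
    have h := POS_le X X 1
    simpa [emd] using h
  · have key : ∀ (A B : Matrix (Fin m) (Fin m) ℝ), POS A B ≤ POS B A := by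
      intro A B
      refine Finset.le_inf' _ _ fun σ _ => ?_
      have h := POS_le A B σ⁻¹
      refine h.trans (le_of_eq ?_)
      refine Fintype.sum_equiv σ⁻¹ _ _ fun j => ?_
      simp only [Equiv.Perm.inv_def, Equiv.apply_symm_apply]
      exact emd_comm _ _
    exact le_antisymm (key X Y) (key Y X)
  · obtain ⟨σ, _, hσ⟩ := Finset.exists_mem_eq_inf' (Finset.univ_nonempty)
      (fun σ : Equiv.Perm (Fin m) => ∑ j : Fin m, emd (fun i => X i j) (fun i => Y i (σ j)))
    obtain ⟨τ, _, hτ⟩ := Finset.exists_mem_eq_inf' (Finset.univ_nonempty)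
      (fun τ : Equiv.Perm (Fin m) => ∑ j : Fin m, emd (fun i => Y i j) (fun i => Z i (τ j)))
    have h1 : POS X Z ≤ ∑ j : Fin m, emd (fun i => X i j) (fun i => Z i (τ (σ j))) := by
      exact POS_le X Z (σ.trans τ)
    have h2 : ∑ j : Fin m, emd (fun i => X i j) (fun i => Z i (τ (σ j)))
        ≤ (∑ j : Fin m, emd (fun i => X i j) (fun i => Y i (σ j)))
          + ∑ j : Fin m, emd (fun i => Y i (σ j)) (fun i => Z i (τ (σ j))) := by
      rw [← Finset.sum_add_distrib]
      exact Finset.sum_le_sum fun j _ => emd_triangle _ _ _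
    have h3 : ∑ j : Fin m, emd (fun i => Y i (σ j)) (fun i => Z i (τ (σ j)))
        = ∑ j : Fin m, emd (fun i => Y i j) (fun i => Z i (τ j)) :=
      Fintype.sum_equiv σ _ _ fun j => rfl
    have hfin : (∑ j : Fin m, emd (fun i => X i j) (fun i => Y i (σ j)))
        + (∑ j : Fin m, emd (fun i => Y i j) (fun i => Z i (τ j))) = POS X Y + POS Y Z := by
      rw [POS, POS, ← hσ, ← hτ]
    linarith
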